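/- arXiv:0910.2722 — 2 statements merged into one kernel-verified Lean document; each statement's English description precedes it below -/
import Mathlib

section
/- Let 0<p<q, p+q+r=1, r>0, and let ρ_2(λ) = (λ−r−√((λ−r)²−4pq))/(2p) for real λ. If λ ∈ (r+2√(pq), 1], then |ρ_2(λ)| < √(q/p); and if λ ∈ [−1, r−2√(pq)), then |ρ_2(λ)| > √(q/p). -/
theorem stmt_6 (p r q : ℝ) (hp : 0 < p) (hpq : p < q) (hr : 0 < r)
    (hsum : p + q + r = 1) (lam : ℝ) :
    (lam ∈ Set.Ioc (r + 2 * Real.sqrt (p * q)) 1 →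
      |(lam - r - Real.sqrt ((lam - r) ^ 2 - 4 * p * q)) / (2 * p)|
        < Real.sqrt (q / p)) ∧
    (lam ∈ Set.Ico (-1 : ℝ) (r - 2 * Real.sqrt (p * q)) →
      |(lam - r - Real.sqrt ((lam - r) ^ 2 - 4 * p * q)) / (2 * p)|
        > Real.sqrt (q / p)) := by
  set a := Real.sqrt (p * q) with ha
  have hpq0 : (0:ℝ) < p * q := mul_pos hp (hp.trans hpq)
  have ha0 : 0 < a := Real.sqrt_pos.mpr hpq0
  have ha2 : a ^ 2 = p * q := Real.sq_sqrt hpq0.le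
  set b := Real.sqrt ((lam - r) ^ 2 - 4 * p * q) with hb
  have hb0 : 0 ≤ b := Real.sqrt_nonneg _
  set c := Real.sqrt (q / p) with hc
  -- a = p * c
  have hac : a = p * c := by
    have h1 : p * q = p ^ 2 * (q / p) := by field_simp
    rw [ha, h1, Real.sqrt_mul (sq_nonneg p), Real.sqrt_sq hp.le]
  constructor
  · rintro ⟨h1, h2⟩
    have hs : 2 * a < lam - r := by linarith
    have hs0 : 0 < lam - r := by nlinarith
    have hD : 0 ≤ (lam - r) ^ 2 - 4 * p * q := by nlinarith
    have hb2 : b ^ 2 = (lam - r) ^ 2 - 4 * p * q := Real.sq_sqrt hD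
    have hbs : b ≤ lam - r := by
      have : b ≤ Real.sqrt ((lam - r) ^ 2) := Real.sqrt_le_sqrt (by nlinarith)
      rwa [Real.sqrt_sq hs0.le] at this
    have hlb : lam - r - 2 * a < b := by
      rw [hb]
      rw [Real.lt_sqrt (by linarith)]
      nlinarith
    have hnn : 0 ≤ (lam - r - b) / (2 * p) := by
      apply div_nonneg (by linarith) (by linarith)
    rw [abs_of_nonneg hnn, div_lt_iff₀ (by linarith)]
    nlinarith
  · rintro ⟨h1, h2⟩
    have hs : lam - r < -(2 * a) := by linarith
    rw [abs_of_nonpos (by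
      apply div_nonpos_of_nonpos_of_nonneg _ (by linarith)
      linarith)]
    rw [gt_iff_lt, show -((lam - r - b) / (2 * p)) = (b - (lam - r)) / (2 * p) by ring,
      lt_div_iff₀ (by linarith)]
    nlinarith
end

section
/- Let 0<p<q, p+q+r=1, r>0. Define φ(x) = √(4pq−(x−r)²) / (2π·((r+q)x+q)·(1−x)) for x ∈ (r−2√(pq), r+2√(pq)) and φ(x)=0 otherwise. Then ∫_{r−2√(pq)}^{r+2√(pq)} φ(x) dx = p/(q+r). -/
open Real Set intervalIntegral

lemma key (a b : ℝ) (ha : 0 < a) (hab : a < b) :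
    ∫ t in (-a)..a, Real.sqrt (a ^ 2 - t ^ 2) / (b - t)
      = Real.pi * (b - Real.sqrt (b ^ 2 - a ^ 2)) := by
  set s2 := Real.sqrt (b ^ 2 - a ^ 2) with hs2def
  have hb2a : (0:ℝ) < b ^ 2 - a ^ 2 := by nlinarith
  have hs2sq : s2 ^ 2 = b ^ 2 - a ^ 2 := Real.sq_sqrt hb2a.le
  have hs2pos : 0 < s2 := Real.sqrt_pos.2 hb2a
  set F : ℝ → ℝ := fun t => -Real.sqrt (a ^ 2 - t ^ 2) + b * Real.arcsin (t / a)
      + s2 * Real.arcsin ((a ^ 2 - b * t) / (a * (b - t))) with hF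
  have hderiv : ∀ t ∈ Set.Ioo (-a) a,
      HasDerivAt F (Real.sqrt (a ^ 2 - t ^ 2) / (b - t)) t := by
    intro t ht
    obtain ⟨ht1, ht2⟩ := ht
    have h1 : 0 < a ^ 2 - t ^ 2 := by nlinarith
    set s1 := Real.sqrt (a ^ 2 - t ^ 2) with hs1def
    have hs1sq : s1 ^ 2 = a ^ 2 - t ^ 2 := Real.sq_sqrt h1.le
    have hs1pos : 0 < s1 := Real.sqrt_pos.2 h1
    have hbt : 0 < b - t := by linarith
    -- part A
    have hg : HasDerivAt (fun u : ℝ => a ^ 2 - u ^ 2) (-(2 * t)) t := by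
      simpa using (hasDerivAt_pow 2 t).const_sub (a ^ 2)
    have hA : HasDerivAt (fun u : ℝ => Real.sqrt (a ^ 2 - u ^ 2))
        (1 / (2 * s1) * -(2 * t)) t :=
      (Real.hasDerivAt_sqrt h1.ne').comp t hg
    -- part B
    have hta1 : t / a < 1 := (div_lt_one ha).2 ht2
    have hta2 : -1 < t / a := by rw [lt_div_iff₀ ha]; linarith
    have hB0 : HasDerivAt (fun u : ℝ => u / a) (1 / a) t := by
      simpa using (hasDerivAt_id t).div_const a
    have hB : HasDerivAt (fun u : ℝ => Real.arcsin (u / a))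
        (1 / Real.sqrt (1 - (t / a) ^ 2) * (1 / a)) t :=
      ((Real.hasDerivAt_arcsin hta2.ne' hta1.ne).comp t hB0 :)
    -- part C
    have hden : a * (b - t) ≠ 0 := (mul_pos ha hbt).ne'
    have hu : HasDerivAt (fun u : ℝ => a ^ 2 - b * u) (-b) t := by
      simpa using ((hasDerivAt_id t).const_mul b).const_sub (a ^ 2)
    have hv : HasDerivAt (fun u : ℝ => a * (b - u)) (a * (-1)) t := by
      simpa using ((hasDerivAt_id t).const_sub b).const_mul a
    have hw : HasDerivAt (fun u : ℝ => (a ^ 2 - b * u) / (a * (b - u)))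
        ((-b * (a * (b - t)) - (a ^ 2 - b * t) * (a * (-1))) / (a * (b - t)) ^ 2) t :=
      hu.div hv hden
    set w := (a ^ 2 - b * t) / (a * (b - t)) with hwdef
    have hw1 : w < 1 := by
      rw [hwdef, div_lt_one (mul_pos ha hbt)]; nlinarith
    have hw2 : -1 < w := by
      rw [hwdef, lt_div_iff₀ (mul_pos ha hbt)]; nlinarith
    have hC : HasDerivAt (fun u : ℝ => Real.arcsin ((a ^ 2 - b * u) / (a * (b - u))))
        (1 / Real.sqrt (1 - w ^ 2) *
          ((-b * (a * (b - t)) - (a ^ 2 - b * t) * (a * (-1))) / (a * (b - t)) ^ 2)) t :=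
      ((Real.hasDerivAt_arcsin hw2.ne' hw1.ne).comp t hw :)
    have hFd : HasDerivAt F
        (-(1 / (2 * s1) * -(2 * t)) + b * (1 / Real.sqrt (1 - (t / a) ^ 2) * (1 / a))
          + s2 * (1 / Real.sqrt (1 - w ^ 2) *
            ((-b * (a * (b - t)) - (a ^ 2 - b * t) * (a * (-1))) / (a * (b - t)) ^ 2))) t :=
      (hA.neg.add (hB.const_mul b)).add (hC.const_mul s2)
    have e1 : Real.sqrt (1 - (t / a) ^ 2) = s1 / a := by
      rw [show 1 - (t / a) ^ 2 = (s1 / a) ^ 2 by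
        rw [div_pow, div_pow, hs1sq]; field_simp]
      exact Real.sqrt_sq (by positivity)
    have e2 : Real.sqrt (1 - w ^ 2) = s2 * s1 / (a * (b - t)) := by
      rw [show 1 - w ^ 2 = (s2 * s1 / (a * (b - t))) ^ 2 by
        rw [hwdef]
        field_simp
        linear_combination (-s2 ^ 2) * hs1sq + (-(a ^ 2 - t ^ 2)) * hs2sq]
      exact Real.sqrt_sq (by positivity)
    have heq : -(1 / (2 * s1) * -(2 * t)) + b * (1 / Real.sqrt (1 - (t / a) ^ 2) * (1 / a))
          + s2 * (1 / Real.sqrt (1 - w ^ 2) *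
            ((-b * (a * (b - t)) - (a ^ 2 - b * t) * (a * (-1))) / (a * (b - t)) ^ 2))
        = s1 / (b - t) := by
      have W : (-b * (a * (b - t)) - (a ^ 2 - b * t) * (a * (-1))) / (a * (b - t)) ^ 2
          = (a ^ 2 - b ^ 2) / (a * (b - t) ^ 2) := by
        rw [div_eq_div_iff (by positivity) (by positivity)]; ring
      rw [e1, e2, W]
      field_simp
      linear_combination (-1 : ℝ) * hs1sq
    rw [hs1def] at heq
    rw [← heq]
    exact hFd
  have hcont : ContinuousOn F (Set.Icc (-a) a) := by
    have c1 : Continuous fun t : ℝ => -Real.sqrt (a ^ 2 - t ^ 2) + b * Real.arcsin (t / a) := by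
      apply Continuous.add
      · exact (Real.continuous_sqrt.comp (by fun_prop)).neg
      · exact continuous_const.mul (Real.continuous_arcsin.comp ((continuous_id.div_const a)))
    have c2 : ContinuousOn (fun t : ℝ => (a ^ 2 - b * t) / (a * (b - t))) (Set.Icc (-a) a) := by
      apply ContinuousOn.div (by fun_prop) (by fun_prop)
      intro x hx
      have h1 : 0 < b - x := by linarith [hx.2]
      positivity
    exact c1.continuousOn.add
      (continuousOn_const.mul (Real.continuous_arcsin.comp_continuousOn c2))
  have hint : IntervalIntegrable (fun t => Real.sqrt (a ^ 2 - t ^ 2) / (b - t))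
      MeasureTheory.volume (-a) a := by
    apply ContinuousOn.intervalIntegrable
    apply ContinuousOn.div (by fun_prop) (by fun_prop)
    intro x hx
    rw [Set.uIcc_of_le (by linarith)] at hx
    have : 0 < b - x := by linarith [hx.2]
    positivity
  rw [intervalIntegral.integral_eq_sub_of_hasDeriv_right_of_le (by linarith) hcont
    (fun x hx => (hderiv x hx).hasDerivWithinAt) hint]
  have hba : (0:ℝ) < b - a := by linarith
  have ea : (a ^ 2 - b * a) / (a * (b - a)) = -1 := by
    rw [div_eq_iff (mul_pos ha hba).ne']; ring
  have eb : (a ^ 2 - b * -a) / (a * (b - -a)) = 1 := by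
    rw [div_eq_iff (by nlinarith : a * (b - -a) ≠ 0)]; ring
  have fa : F a = b * (Real.pi / 2) + s2 * -(Real.pi / 2) := by
    rw [hF]
    simp only [ea, div_self ha.ne', Real.arcsin_one, Real.arcsin_neg_one, sub_self,
      Real.sqrt_zero]
    ring
  have fb : F (-a) = b * -(Real.pi / 2) + s2 * (Real.pi / 2) := by
    rw [hF]
    simp only [eb, neg_div, div_self ha.ne', Real.arcsin_one, Real.arcsin_neg,
      Real.arcsin_neg_one]
    rw [show a ^ 2 - (-a) ^ 2 = 0 by ring, Real.sqrt_zero]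
    ring
  rw [fa, fb]
  ring

lemma key' (a b : ℝ) (ha : 0 < a) (hab : a < b) :
    ∫ t in (-a)..a, Real.sqrt (a ^ 2 - t ^ 2) / (b + t)
      = Real.pi * (b - Real.sqrt (b ^ 2 - a ^ 2)) := by
  have h := intervalIntegral.integral_comp_neg
    (fun t => Real.sqrt (a ^ 2 - t ^ 2) / (b - t)) (a := -a) (b := a)
  simp only [neg_neg] at h
  have h2 : (fun t : ℝ => Real.sqrt (a ^ 2 - t ^ 2) / (b + t))
      = fun t : ℝ => Real.sqrt (a ^ 2 - (-t) ^ 2) / (b - (-t)) := by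
    funext t; rw [neg_sq, sub_neg_eq_add]
  rw [show (∫ t in (-a)..a, Real.sqrt (a ^ 2 - t ^ 2) / (b + t))
      = ∫ t in (-a)..a, Real.sqrt (a ^ 2 - (-t) ^ 2) / (b - (-t)) by rw [← h2], h]
  exact key a b ha hab

theorem stmt_8 (p r q : ℝ) (hp : 0 < p) (hpq : p < q) (hr : 0 < r)
    (hsum : p + q + r = 1) :
    ∫ x in (r - 2 * Real.sqrt (p * q))..(r + 2 * Real.sqrt (p * q)),
      Real.sqrt (4 * p * q - (x - r) ^ 2) /
        (2 * Real.pi * ((r + q) * x + q) * (1 - x))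
      = p / (q + r) := by
  have hq : 0 < q := lt_trans hp hpq
  have hqr : 0 < q + r := by linarith
  have h2qr : 0 < 2 * q + r := by linarith
  have hpq0 : 0 < p * q := mul_pos hp hq
  have hsq : Real.sqrt (p * q) ^ 2 = p * q := Real.sq_sqrt hpq0.le
  have hspq : 0 < Real.sqrt (p * q) := Real.sqrt_pos.2 hpq0
  set a := 2 * Real.sqrt (p * q) with hadef
  have ha : 0 < a := by positivity
  have ha2 : a ^ 2 = 4 * p * q := by rw [hadef, mul_pow, hsq]; ring
  have hsqlt : Real.sqrt (p * q) < q := by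
    have h := Real.sqrt_lt_sqrt hpq0.le (by nlinarith : p * q < q * q)
    rwa [Real.sqrt_mul_self hq.le] at h
  have hb2 : a < 1 - r := by
    have h1 : Real.sqrt (p * q) = Real.sqrt p * Real.sqrt q := Real.sqrt_mul hp.le q
    have h2 : Real.sqrt p < Real.sqrt q := Real.sqrt_lt_sqrt hp.le hpq
    have h3 : Real.sqrt p ^ 2 = p := Real.sq_sqrt hp.le
    have h4 : Real.sqrt q ^ 2 = q := Real.sq_sqrt hq.le
    have h5 : 0 < (Real.sqrt q - Real.sqrt p) ^ 2 := pow_pos (by linarith) 2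
    nlinarith
  have hb1 : a < r + q / (q + r) := by
    have h5 : 0 < (q + r - Real.sqrt (p * q)) ^ 2 := pow_pos (by linarith) 2
    have key2 : a * (q + r) < r * (q + r) + q := by nlinarith
    rw [show r + q / (q + r) = (r * (q + r) + q) / (q + r) by field_simp,
      lt_div_iff₀ hqr]
    exact key2
  have hs1v : Real.sqrt ((r + q / (q + r)) ^ 2 - a ^ 2)
      = ((q + r) ^ 2 - p * q) / (q + r) := by
    rw [show (r + q / (q + r)) ^ 2 - a ^ 2 = (((q + r) ^ 2 - p * q) / (q + r)) ^ 2 by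
      rw [ha2]; field_simp
      linear_combination (-(q * (p * q + q ^ 2 + 3 * q * r + 2 * r ^ 2 + q))) * hsum]
    have hnum : 0 < (q + r) ^ 2 - p * q := by nlinarith
    exact Real.sqrt_sq (by positivity)
  have hs2v : Real.sqrt ((1 - r) ^ 2 - a ^ 2) = q - p := by
    rw [show (1 - r) ^ 2 - a ^ 2 = (q - p) ^ 2 by
      rw [ha2]; linear_combination (-(1 - r + p + q)) * hsum]
    exact Real.sqrt_sq (by linarith)
  have k1 := key' a (r + q / (q + r)) ha hb1
  have k2 := key a (1 - r) ha hb2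
  -- substitution x = t + r
  rw [show r - a = -a + r by ring, show r + a = a + r by ring,
    ← intervalIntegral.integral_comp_add_right
      (fun x => Real.sqrt (4 * p * q - (x - r) ^ 2) /
        (2 * Real.pi * ((r + q) * x + q) * (1 - x))) r]
  -- partial fractions
  have hEq : Set.EqOn
      (fun t => Real.sqrt (4 * p * q - (t + r - r) ^ 2) /
        (2 * Real.pi * ((r + q) * (t + r) + q) * (1 - (t + r))))
      (fun t => (1 / (2 * Real.pi * (2 * q + r))) *
          (Real.sqrt (a ^ 2 - t ^ 2) / ((r + q / (q + r)) + t))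
        + (1 / (2 * Real.pi * (2 * q + r))) *
          (Real.sqrt (a ^ 2 - t ^ 2) / ((1 - r) - t)))
      (Set.uIcc (-a) a) := by
    intro t ht
    rw [Set.uIcc_of_le (by linarith)] at ht
    obtain ⟨ht1, ht2⟩ := ht
    have d1pos : 0 < (r + q / (q + r)) + t := by linarith
    have d2pos : 0 < (1 - r) - t := by linarith
    simp only
    rw [show t + r - r = t by ring, show (4:ℝ) * p * q = a ^ 2 by rw [ha2],
      show (r + q) * (t + r) + q = (q + r) * ((r + q / (q + r)) + t) by
        field_simp; ring,
      show 1 - (t + r) = (1 - r) - t by ring]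
    have hπ := Real.pi_ne_zero
    have e1 : (r + q / (q + r)) + t = ((r + t) * (q + r) + q) / (q + r) := by
      field_simp; ring
    have d1pos' : 0 < (r + t) * (q + r) + q := by
      rw [e1] at d1pos
      exact ((div_pos_iff.1 d1pos).resolve_right
        (fun h => absurd hqr (by linarith [h.2]))).1
    rw [e1]
    field_simp
    have hD : (q + r) * (r + t) + q ≠ 0 := by nlinarith [d1pos']
    rw [div_add_one hD, mul_div_assoc]
    congr 2
    ring
  rw [intervalIntegral.integral_congr hEq]
  have hi1 : IntervalIntegrable
      (fun t => (1 / (2 * Real.pi * (2 * q + r))) *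
        (Real.sqrt (a ^ 2 - t ^ 2) / ((r + q / (q + r)) + t)))
      MeasureTheory.volume (-a) a := by
    apply ContinuousOn.intervalIntegrable
    apply ContinuousOn.mul continuousOn_const
    apply ContinuousOn.div (by fun_prop) (by fun_prop)
    intro x hx
    rw [Set.uIcc_of_le (by linarith)] at hx
    have := hx.1
    have : 0 < (r + q / (q + r)) + x := by linarith [hx.1]
    linarith
  have hi2 : IntervalIntegrable
      (fun t => (1 / (2 * Real.pi * (2 * q + r))) *
        (Real.sqrt (a ^ 2 - t ^ 2) / ((1 - r) - t)))
      MeasureTheory.volume (-a) a := by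
    apply ContinuousOn.intervalIntegrable
    apply ContinuousOn.mul continuousOn_const
    apply ContinuousOn.div (by fun_prop) (by fun_prop)
    intro x hx
    rw [Set.uIcc_of_le (by linarith)] at hx
    have : 0 < (1 - r) - x := by linarith [hx.2]
    linarith
  rw [intervalIntegral.integral_add hi1 hi2, intervalIntegral.integral_const_mul,
    intervalIntegral.integral_const_mul, k1, k2, hs1v, hs2v]
  have hπ := Real.pi_pos
  field_simp
  ring_nf
  linear_combination (-(2 * q + r)) * hsum
end
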